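/- arXiv:2409.07639 — 6 statements merged into one kernel-verified Lean document; each statement's English description precedes it below -/
import Mathlib

section
/- First variation identity for the Hawking mass (equation (2.13) of the paper). Let n ≥ 3 be an integer, λ ≥ 0, and let V, k_S be differentiable real functions and k_I any real function on an interval of r > 0 with V > 0. With H(r) = (n−1)·√(V(r))/r, R(r) = (n−1)·r^{1−n}·(d/dr)[r^{n−2}·(1 − V(r))], and m_H(r) = (r^{n−2}/2)·[1 − V(r) + r²·k_S(r)²/(n−1)²], one has for every r in the interval: (d/dr)[m_H(r) + λ·r^n/2] = (r^{n−1}/(2(n−1)))·{ R(r) + (k_I + k_S)² − k_I² − k_S²/(n−1) + n(n−1)·λ − 2·k_S·[k_I − k_S/(n−1) − r·k_S′/(n−1)] }. -/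
/-- First variation identity for the Hawking mass (eq. (2.13)/(2.16) of the paper).
With `H(r) = (n-1)√(V r)/r`, `R(r) = (n-1) r^{1-n} d/dr [r^{n-2}(1-V)]` and
`m_H(r) = (r^{n-2}/2)[1 - V + r² k_S²/(n-1)²]`, one has
`(m_H + λ r^n/2)' = (r^{n-1}/(2(n-1))) { R + (k_I+k_S)² - k_I² - k_S²/(n-1)
  + n(n-1)λ - 2 k_S (k_I - k_S/(n-1) - r k_S'/(n-1)) }`. -/
theorem hawking_mass_first_variation (n : ℕ) (hn : 3 ≤ n) (lam : ℝ) (hlam : 0 ≤ lam)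
    (V kI kS : ℝ → ℝ) (r V' kS' : ℝ) (hr : 0 < r) (hV : 0 < V r)
    (hVd : HasDerivAt V V' r) (hkSd : HasDerivAt kS kS' r) :
    HasDerivAt
      (fun ρ => ρ ^ (n - 2) / 2 * (1 - V ρ + ρ ^ 2 * kS ρ ^ 2 / ((n : ℝ) - 1) ^ 2)
        + lam * ρ ^ n / 2)
      (r ^ (n - 1) / (2 * ((n : ℝ) - 1)) *
        (((n : ℝ) - 1) / r ^ (n - 1) *
            (((n : ℝ) - 2) * r ^ (n - 3) * (1 - V r) - r ^ (n - 2) * V')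
          + (kI r + kS r) ^ 2 - kI r ^ 2 - kS r ^ 2 / ((n : ℝ) - 1)
          + (n : ℝ) * ((n : ℝ) - 1) * lam
          - 2 * kS r * (kI r - kS r / ((n : ℝ) - 1) - r * kS' / ((n : ℝ) - 1)))) r := by
  obtain ⟨m, rfl⟩ := Nat.exists_eq_add_of_le hn
  have e1 : 3 + m - 2 = m + 1 := by omega
  have e2 : 3 + m - 3 = m := by omega
  have e3 : 3 + m - 1 = m + 2 := by omega
  have hcast : ((3 + m : ℕ) : ℝ) = (m : ℝ) + 3 := by push_cast; ring
  rw [e1, e2, e3, hcast]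
  have hr0 : r ≠ 0 := ne_of_gt hr
  have hc0 : (m : ℝ) + 3 - 1 ≠ 0 := by
    have : (0:ℝ) ≤ m := Nat.cast_nonneg m
    intro h; linarith
  have hp : HasDerivAt (fun ρ : ℝ => ρ ^ (m + 1) / 2)
      (((m : ℝ) + 1) * r ^ m / 2) r := by
    simpa using (hasDerivAt_pow (m + 1) r).div_const 2
  have hinner : HasDerivAt (fun ρ : ℝ => 1 - V ρ + ρ ^ 2 * kS ρ ^ 2 / ((m : ℝ) + 3 - 1) ^ 2)
      (-V' + (2 * r * kS r ^ 2 + r ^ 2 * (2 * kS r * kS')) / ((m : ℝ) + 3 - 1) ^ 2) r := by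
    have h2 : HasDerivAt (fun ρ : ℝ => ρ ^ 2 * kS ρ ^ 2 / ((m : ℝ) + 3 - 1) ^ 2)
        ((2 * r * kS r ^ 2 + r ^ 2 * (2 * kS r * kS')) / ((m : ℝ) + 3 - 1) ^ 2) r := by
      have := ((hasDerivAt_pow 2 r).mul (hkSd.pow 2)).div_const (((m : ℝ) + 3 - 1) ^ 2)
      simpa [mul_comm, mul_assoc, mul_left_comm] using this
    have h1 : HasDerivAt (fun ρ : ℝ => 1 - V ρ) (-V') r := by
      simpa using hVd.const_sub 1
    exact h1.add h2
  have hlamp : HasDerivAt (fun ρ : ℝ => lam * ρ ^ (3 + m) / 2)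
      (lam * (((m : ℝ) + 3) * r ^ (m + 2)) / 2) r := by
    have := ((hasDerivAt_pow (3 + m) r).const_mul lam).div_const 2
    simpa [e3, hcast] using this
  have h := (hp.mul hinner).add hlamp
  convert h using 1
  · rfl
  · rfl
  · rfl
  have hrp : r ^ (m + 2) ≠ 0 := pow_ne_zero _ hr0
  field_simp
  ring
end

section
/- Derivative formula for the charged Hawking mass (equation (2.14) in spherical symmetry). Let n ≥ 3, λ ≥ 0, r₊ > 0, and let V, k_I, k_S, E_I be spherically symmetric charged radial data on [r₊,∞) (V, k_S differentiable, V > 0 on (r₊,∞)) satisfying the radial Einstein–Maxwell constraint equations with uncharged energy density μ̂ and radial momentum density Ĵ_ν and the Gauss law, with charge q. Then for every r > r₊: m_CH′(r) = (8π·r^{n−1}/(n−1))·[ μ̂(r) − (k_S(r)/H(r))·Ĵ_ν(r) ]. -/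
open Real Filter

/-- Mean curvature of the coordinate sphere of radius `r`: `H = (n-1)√(V r)/r`. -/
noncomputable def sphMeanCurv (n : ℕ) (V : ℝ → ℝ) (r : ℝ) : ℝ :=
  ((n : ℝ) - 1) * Real.sqrt (V r) / r

/-- Scalar curvature of `g = V⁻¹dr² + r²·(round metric)`:
`R = (n-1) r^{1-n} (d/dr)[r^{n-2}(1 - V)]`. -/
noncomputable def sphScalCurv (n : ℕ) (V : ℝ → ℝ) (r : ℝ) : ℝ :=
  ((n : ℝ) - 1) / r ^ (n - 1) * deriv (fun ρ => ρ ^ (n - 2) * (1 - V ρ)) r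

/-- The charged Hawking mass
`m_CH(r) = (r^{n-2}/2)[1 - V + r² k_S²/(n-1)²] + λ r^n/2 + q²/(2 r^{n-2})`. -/
noncomputable def chargedHawkingMass (n : ℕ) (lam q : ℝ) (V kS : ℝ → ℝ) (r : ℝ) : ℝ :=
  r ^ (n - 2) / 2 * (1 - V r + r ^ 2 * kS r ^ 2 / ((n : ℝ) - 1) ^ 2)
    + lam * r ^ n / 2 + q ^ 2 / (2 * r ^ (n - 2))

/-- Derivative formula for the charged Hawking mass (eq. (2.14) in spherical symmetry):
given the radial Einstein–Maxwell constraints with uncharged energy density `μ̂` and radial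
momentum density `Ĵ_ν`, and the Gauss law with charge `q`, one has for `r > rp`:
`m_CH'(r) = (8π r^{n-1}/(n-1))·[ μ̂(r) - (k_S(r)/H(r))·Ĵ_ν(r) ]`. -/
theorem chargedHawkingMass_deriv (n : ℕ) (hn : 3 ≤ n) (lam rp : ℝ) (hlam : 0 ≤ lam)
    (hrp : 0 < rp) (V kI kS EI μ J : ℝ → ℝ) (q : ℝ)
    (hV0 : ∀ r, rp ≤ r → 0 ≤ V r) (hVpos : ∀ r, rp < r → 0 < V r)
    (hVd : ∀ r, rp < r → DifferentiableAt ℝ V r)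
    (hkSd : ∀ r, rp < r → DifferentiableAt ℝ kS r)
    (hEIcont : Continuous EI)
    -- Hamiltonian constraint
    (hmu : ∀ r, rp < r → 16 * π * μ r =
      sphScalCurv n V r + (kI r + kS r) ^ 2 - kI r ^ 2 - kS r ^ 2 / ((n : ℝ) - 1)
        - 2 * V r * EI r ^ 2 + (n : ℝ) * ((n : ℝ) - 1) * lam)
    -- momentum constraint
    (hJ : ∀ r, rp < r → 8 * π * J r =
      sphMeanCurv n V r *
        (kI r - kS r / ((n : ℝ) - 1) - r * deriv kS r / ((n : ℝ) - 1)))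
    -- Gauss law with charge `q`
    (hq : ∀ r, rp ≤ r →
      Real.sqrt (2 / (((n : ℝ) - 1) * ((n : ℝ) - 2))) * r ^ (n - 1) * Real.sqrt (V r) * EI r
        = q) :
    ∀ r, rp < r →
      HasDerivAt (chargedHawkingMass n lam q V kS)
        (8 * π * r ^ (n - 1) / ((n : ℝ) - 1) *
          (μ r - kS r / sphMeanCurv n V r * J r)) r := by

  intro r hr
  have hrpos : 0 < r := hrp.trans hr
  have hrne : r ≠ 0 := hrpos.ne'
  have hn3 : (3:ℝ) ≤ (n:ℝ) := by exact_mod_cast hn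
  have hn1 : ((n:ℝ) - 1) ≠ 0 := by linarith
  have hn2 : ((n:ℝ) - 2) ≠ 0 := by linarith
  have hVr : 0 < V r := hVpos r hr
  set s := Real.sqrt (V r) with hs
  have hs2 : s ^ 2 = V r := Real.sq_sqrt hVr.le
  have hspos : 0 < s := Real.sqrt_pos.mpr hVr
  have hsne : s ≠ 0 := hspos.ne'
  -- charge squared
  have hq2 : q ^ 2 = 2 / (((n:ℝ) - 1) * ((n:ℝ) - 2)) * (r ^ (n-1)) ^ 2 * (s ^ 2) * EI r ^ 2 := by
    rw [← hq r hr.le]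
    have hc : Real.sqrt (2 / (((n:ℝ) - 1) * ((n:ℝ) - 2))) ^ 2
        = 2 / (((n:ℝ) - 1) * ((n:ℝ) - 2)) := by
      apply Real.sq_sqrt
      have h1 : (0:ℝ) ≤ (n:ℝ) - 1 := by linarith
      have h2 : (0:ℝ) ≤ (n:ℝ) - 2 := by linarith
      positivity
    rw [mul_pow, mul_pow, mul_pow, hc]
  -- derivative building blocks
  have hV' : HasDerivAt V (deriv V r) r := (hVd r hr).hasDerivAt
  have hkS' : HasDerivAt kS (deriv kS r) r := (hkSd r hr).hasDerivAt
  have hA : HasDerivAt (fun ρ : ℝ => ρ ^ (n-2)) ((n-2 : ℕ) * r ^ (n-2-1)) r :=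
    hasDerivAt_pow (n-2) r
  have hD : HasDerivAt (fun ρ : ℝ => ρ ^ (n-2) * (1 - V ρ))
      ((n-2 : ℕ) * r ^ (n-2-1) * (1 - V r) + r ^ (n-2) * (0 - deriv V r)) r :=
    hA.mul ((hasDerivAt_const r (1:ℝ)).sub hV')
  have hDval : deriv (fun ρ : ℝ => ρ ^ (n-2) * (1 - V ρ)) r
      = (n-2 : ℕ) * r ^ (n-2-1) * (1 - V r) + r ^ (n-2) * (0 - deriv V r) := hD.deriv
  have hInner : HasDerivAt (fun ρ : ℝ => 1 - V ρ + ρ ^ 2 * kS ρ ^ 2 / ((n:ℝ) - 1) ^ 2)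
      ((0 - deriv V r) +
        ((2 : ℕ) * r ^ 1 * kS r ^ 2 + r ^ 2 * (2 * kS r ^ 1 * deriv kS r)) / ((n:ℝ) - 1) ^ 2) r :=
    ((hasDerivAt_const r (1:ℝ)).sub hV').add
      (((hasDerivAt_pow 2 r).mul (hkS'.pow 2)).div_const _)
  have hInv : HasDerivAt (fun ρ : ℝ => q ^ 2 / (2 * ρ ^ (n-2)))
      ((0 * (2 * r ^ (n-2)) - q ^ 2 * (2 * ((n-2 : ℕ) * r ^ (n-2-1)))) / (2 * r ^ (n-2)) ^ 2) r :=
    (hasDerivAt_const r (q ^ 2)).div (hA.const_mul 2) (by positivity)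
  have hLam : HasDerivAt (fun ρ : ℝ => lam * ρ ^ n / 2)
      (lam * ((n : ℕ) * r ^ (n-1)) / 2) r :=
    ((hasDerivAt_pow n r).const_mul lam).div_const 2
  have hTot : HasDerivAt (fun ρ : ℝ =>
      ρ ^ (n-2) * (1 - V ρ + ρ ^ 2 * kS ρ ^ 2 / ((n:ℝ) - 1) ^ 2) / 2
        + lam * ρ ^ n / 2 + q ^ 2 / (2 * ρ ^ (n-2)))
      (((n-2 : ℕ) * r ^ (n-2-1) * (1 - V r + r ^ 2 * kS r ^ 2 / ((n:ℝ) - 1) ^ 2)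
          + r ^ (n-2) * ((0 - deriv V r) +
            ((2 : ℕ) * r ^ 1 * kS r ^ 2 + r ^ 2 * (2 * kS r ^ 1 * deriv kS r)) / ((n:ℝ) - 1) ^ 2)) / 2
        + lam * ((n : ℕ) * r ^ (n-1)) / 2
        + (0 * (2 * r ^ (n-2)) - q ^ 2 * (2 * ((n-2 : ℕ) * r ^ (n-2-1)))) / (2 * r ^ (n-2)) ^ 2) r :=
    (((hA.mul hInner).div_const 2).add hLam).add hInv
  have hfun : chargedHawkingMass n lam q V kS = fun ρ : ℝ =>
      ρ ^ (n-2) * (1 - V ρ + ρ ^ 2 * kS ρ ^ 2 / ((n:ℝ) - 1) ^ 2) / 2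
        + lam * ρ ^ n / 2 + q ^ 2 / (2 * ρ ^ (n-2)) := by
    funext ρ; unfold chargedHawkingMass; ring
  rw [hfun]
  convert hTot using 1
  -- now a scalar identity
  have hμr := hmu r hr
  have hJr := hJ r hr
  have hμval : μ r = (sphScalCurv n V r + (kI r + kS r) ^ 2 - kI r ^ 2
      - kS r ^ 2 / ((n:ℝ) - 1) - 2 * V r * EI r ^ 2 + (n:ℝ) * ((n:ℝ) - 1) * lam) / (16 * π) := by
    field_simp at hμr ⊢
    linarith [hμr]
  have hJval : J r = sphMeanCurv n V r *
      (kI r - kS r / ((n:ℝ) - 1) - r * deriv kS r / ((n:ℝ) - 1)) / (8 * π) := by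
    field_simp at hJr ⊢
    linarith [hJr]
  rw [hμval, hJval, sphMeanCurv, sphScalCurv, hDval, hq2]
  rw [← hs2, Real.sqrt_sq hspos.le]
  have e1 : n - 2 = (n - 3) + 1 := by omega
  have e2 : n - 1 = (n - 3) + 2 := by omega
  have e3 : n - 2 - 1 = n - 3 := by omega
  rw [e3, e1, e2]
  push_cast [Nat.cast_sub hn]
  have hrpow : r ^ (n - 3) ≠ 0 := pow_ne_zero _ hrne
  have hπ : (π : ℝ) ≠ 0 := Real.pi_ne_zero
  field_simp
  ring
end

section
/- Monotonicity of the charged Hawking mass (Proposition 2.2). Let n ≥ 3, λ ≥ 0, r₊ > 0, and let V, k_I, k_S, E_I be spherically symmetric charged radial data on [r₊,∞) satisfying the radial Einstein–Maxwell constraint equations with uncharged energy density μ̂ and radial momentum density Ĵ_ν and the Gauss law, with charge q. Assume the dominant energy condition μ̂(r) ≥ |Ĵ_ν(r)| for all r > r₊ and the outermost condition H(r) > |k_S(r)| for all r > r₊. Then the charged Hawking mass m_CH is non-decreasing on [r₊,∞): for all r₊ ≤ r₁ ≤ r₂, m_CH(r₁) ≤ m_CH(r₂) (assuming m_CH is continuous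 at r₊). -/
open Real Filter

/-- Monotonicity of the charged Hawking mass (Proposition 2.2): under the radial
Einstein–Maxwell constraints, the Gauss law, the dominant energy condition `μ̂ ≥ |Ĵ_ν|`
and the outermost condition `H > |k_S|`, the charged Hawking mass is non-decreasing
on `[r₊, ∞)`. -/
theorem chargedHawkingMass_monotone (n : ℕ) (hn : 3 ≤ n) (lam rp : ℝ) (hlam : 0 ≤ lam)
    (hrp : 0 < rp) (V kI kS EI μ J : ℝ → ℝ) (q : ℝ)
    (hV0 : ∀ r, rp ≤ r → 0 ≤ V r) (hVpos : ∀ r, rp < r → 0 < V r)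
    (hVd : ∀ r, rp < r → DifferentiableAt ℝ V r)
    (hkSd : ∀ r, rp < r → DifferentiableAt ℝ kS r)
    (hEIcont : Continuous EI)
    -- Hamiltonian constraint
    (hmu : ∀ r, rp < r → 16 * π * μ r =
      sphScalCurv n V r + (kI r + kS r) ^ 2 - kI r ^ 2 - kS r ^ 2 / ((n : ℝ) - 1)
        - 2 * V r * EI r ^ 2 + (n : ℝ) * ((n : ℝ) - 1) * lam)
    -- momentum constraint
    (hJ : ∀ r, rp < r → 8 * π * J r =
      sphMeanCurv n V r *
        (kI r - kS r / ((n : ℝ) - 1) - r * deriv kS r / ((n : ℝ) - 1)))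
    -- Gauss law with charge `q`
    (hq : ∀ r, rp ≤ r →
      Real.sqrt (2 / (((n : ℝ) - 1) * ((n : ℝ) - 2))) * r ^ (n - 1) * Real.sqrt (V r) * EI r
        = q)
    -- dominant energy condition
    (hDEC : ∀ r, rp < r → |J r| ≤ μ r)
    -- outermost condition
    (hout : ∀ r, rp < r → |kS r| < sphMeanCurv n V r)
    -- continuity of the charged Hawking mass at the horizon `r = rp`
    (hcont : ContinuousWithinAt (chargedHawkingMass n lam q V kS) (Set.Ici rp) rp) :
    ∀ r₁ r₂ : ℝ, rp ≤ r₁ → r₁ ≤ r₂ →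
      chargedHawkingMass n lam q V kS r₁ ≤ chargedHawkingMass n lam q V kS r₂ := by
  have hπ : (0:ℝ) < π := Real.pi_pos
  have hN3 : (3:ℝ) ≤ (n:ℝ) := by exact_mod_cast hn
  have hN1 : (0:ℝ) < (n:ℝ) - 1 := by linarith
  have hN2 : (0:ℝ) < (n:ℝ) - 2 := by linarith
  -- rewrite the mass in a differentiation-friendly form
  have hfg : chargedHawkingMass n lam q V kS = fun ρ =>
      (ρ ^ (n - 2) * (1 - V ρ)) / 2 + ρ ^ n * kS ρ ^ 2 / (2 * ((n:ℝ) - 1) ^ 2)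
        + lam * ρ ^ n / 2 + q ^ 2 / 2 * (ρ ^ (n - 2))⁻¹ := by
    funext ρ
    have hρ : ρ ^ n = ρ ^ (n - 2) * ρ ^ 2 := by
      rw [← pow_add]; congr 1; omega
    simp only [chargedHawkingMass, hρ]
    rcases eq_or_ne ((ρ : ℝ) ^ (n - 2)) 0 with hP | hP
    · simp [hP]
    · field_simp
  have key : ∀ r, rp < r →
      HasDerivAt (chargedHawkingMass n lam q V kS)
        (8 * π * r ^ (n - 1) * (μ r * sphMeanCurv n V r - kS r * J r)
          / (((n:ℝ) - 1) * sphMeanCurv n V r)) r ∧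
      0 ≤ 8 * π * r ^ (n - 1) * (μ r * sphMeanCurv n V r - kS r * J r)
          / (((n:ℝ) - 1) * sphMeanCurv n V r) := by
    intro r hr
    have hr0 : 0 < r := hrp.trans hr
    have hv : 0 < V r := hVpos r hr
    have hHpos : 0 < sphMeanCurv n V r := (abs_nonneg _).trans_lt (hout r hr)
    have hkS' : HasDerivAt kS (deriv kS r) r := (hkSd r hr).hasDerivAt
    have hA : HasDerivAt (fun ρ => ρ ^ (n - 2) * (1 - V ρ))
        (deriv (fun ρ => ρ ^ (n - 2) * (1 - V ρ)) r) r :=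
      ((differentiableAt_pow (n - 2)).mul
        ((differentiableAt_const 1).sub (hVd r hr))).hasDerivAt
    have hB : HasDerivAt (fun ρ => ρ ^ n * kS ρ ^ 2)
        ((n : ℝ) * r ^ (n - 1) * kS r ^ 2
          + r ^ n * ((2 : ℕ) * kS r ^ (2 - 1) * deriv kS r)) r :=
      (hasDerivAt_pow n r).mul (hkS'.pow 2)
    have hC : HasDerivAt (fun ρ => lam * ρ ^ n / 2)
        (lam * ((n : ℝ) * r ^ (n - 1)) / 2) r :=
      ((hasDerivAt_pow n r).const_mul lam).div_const 2
    have hE : HasDerivAt (fun ρ => q ^ 2 / 2 * (ρ ^ (n - 2))⁻¹)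
        (q ^ 2 / 2 * (-(((n - 2 : ℕ) : ℝ) * r ^ (n - 2 - 1)) / (r ^ (n - 2)) ^ 2)) r :=
      (((hasDerivAt_pow (n - 2) r).inv (pow_ne_zero _ hr0.ne'))).const_mul (q ^ 2 / 2)
    have hg := (((hA.div_const 2).add (hB.div_const (2 * ((n:ℝ) - 1) ^ 2))).add hC).add hE
    have hcast2 : ((n - 2 : ℕ) : ℝ) = (n:ℝ) - 2 := by
      push_cast [Nat.cast_sub (by omega : 2 ≤ n)]; ring
    -- power bookkeeping
    have hp0 : r ^ n = r ^ (n - 3) * r ^ 3 := by rw [← pow_add]; congr 1; omega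
    have hp1 : r ^ (n - 1) = r ^ (n - 3) * r ^ 2 := by rw [← pow_add]; congr 1; omega
    have hp2 : r ^ (n - 2) = r ^ (n - 3) * r := by
      rw [show n - 2 = (n - 3) + 1 from by omega, pow_succ]
    have hp3 : r ^ (n - 2 - 1) = r ^ (n - 3) := by rw [show n - 2 - 1 = n - 3 from by omega]
    have hQ0 : r ^ (n - 3) ≠ 0 := pow_ne_zero _ hr0.ne'
    -- Gauss law consequence
    have hq2 : q ^ 2 = 2 / (((n:ℝ) - 1) * ((n:ℝ) - 2)) * (r ^ (n - 1)) ^ 2 * V r * EI r ^ 2 := by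
      have h1 := hq r hr.le
      have hc2 : Real.sqrt (2 / (((n:ℝ) - 1) * ((n:ℝ) - 2))) ^ 2
          = 2 / (((n:ℝ) - 1) * ((n:ℝ) - 2)) := Real.sq_sqrt (by positivity)
      have hs2 : Real.sqrt (V r) ^ 2 = V r := Real.sq_sqrt hv.le
      calc q ^ 2 = (Real.sqrt (2 / (((n:ℝ) - 1) * ((n:ℝ) - 2))) * r ^ (n - 1)
            * Real.sqrt (V r) * EI r) ^ 2 := by rw [h1]
        _ = Real.sqrt (2 / (((n:ℝ) - 1) * ((n:ℝ) - 2))) ^ 2 * (r ^ (n - 1)) ^ 2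
            * Real.sqrt (V r) ^ 2 * EI r ^ 2 := by ring
        _ = _ := by rw [hc2, hs2]
    -- solved constraints
    have hμval : μ r = (sphScalCurv n V r + (kI r + kS r) ^ 2 - kI r ^ 2
        - kS r ^ 2 / ((n:ℝ) - 1) - 2 * V r * EI r ^ 2 + (n:ℝ) * ((n:ℝ) - 1) * lam)
          / (16 * π) := by
      have h := hmu r hr
      have h16 : (16 * π : ℝ) ≠ 0 := by positivity
      rw [eq_div_iff h16]
      linear_combination h
    have hJval : J r = sphMeanCurv n V r
        * (kI r - kS r / ((n:ℝ) - 1) - r * deriv kS r / ((n:ℝ) - 1)) / (8 * π) := by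
      have h := hJ r hr
      have h8 : (8 * π : ℝ) ≠ 0 := by positivity
      rw [eq_div_iff h8]
      linear_combination h
    have hfd : HasDerivAt (chargedHawkingMass n lam q V kS)
        (8 * π * r ^ (n - 1) * (μ r * sphMeanCurv n V r - kS r * J r)
          / (((n:ℝ) - 1) * sphMeanCurv n V r)) r := by
      rw [hfg]
      refine hg.congr_deriv ?_
      symm
      rw [hμval, hJval]
      simp only [sphScalCurv, sphMeanCurv]
      rw [hq2]
      set s := Real.sqrt (V r) with hsdef
      have hs2 : s ^ 2 = V r := Real.sq_sqrt hv.le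
      have hs0 : s ≠ 0 := by rw [hsdef]; exact (Real.sqrt_pos.mpr hv).ne'
      rw [← hs2, hcast2, hp0, hp1, hp2, hp3]
      push_cast
      norm_num
      field_simp
      ring
    refine ⟨hfd, ?_⟩
    apply div_nonneg _ (by positivity)
    have h1 : kS r * J r ≤ |kS r| * |J r| := (le_abs_self _).trans (abs_mul _ _).le
    have h2 : |kS r| * |J r| ≤ sphMeanCurv n V r * μ r :=
      mul_le_mul (hout r hr).le (hDEC r hr) (abs_nonneg _) hHpos.le
    have h3 : 0 ≤ μ r * sphMeanCurv n V r - kS r * J r := by nlinarith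
    positivity
  have hmono : MonotoneOn (chargedHawkingMass n lam q V kS) (Set.Ici rp) := by
    apply monotoneOn_of_deriv_nonneg (convex_Ici rp)
    · intro r hr
      rcases eq_or_lt_of_le (Set.mem_Ici.mp hr) with h | h
      · rw [← h]; exact hcont
      · exact ((key r h).1.continuousAt).continuousWithinAt
    · intro r hr
      rw [interior_Ici] at hr
      exact ((key r hr).1.differentiableAt).differentiableWithinAt
    · intro r hr
      rw [interior_Ici] at hr
      rw [(key r hr).1.deriv]
      exact (key r hr).2
  exact fun r₁ r₂ h1 h12 => hmono h1 (h1.trans h12) h12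
end

section
/- Charged spacetime Penrose inequality in spherical symmetry (radial formulation of Theorem 1.1). Let n ≥ 3, λ ≥ 0, r₊ > 0, and let V, k_I, k_S, E_I be spherically symmetric charged radial data on [r₊,∞) satisfying the radial Einstein–Maxwell constraint equations with uncharged energy density μ̂ and radial momentum density Ĵ_ν and the Gauss law, with charge q. Assume: (i) the dominant energy condition μ̂(r) ≥ |Ĵ_ν(r)| for all r > r₊; (ii) the outermost condition H(r) > |k_S(r)| for all r > r₊; (iii) the boundary sphere r = r₊ is a marginally outer trapped surface, i.e. k_S(r₊)² = H(r₊)² = (n−1)²·V(r₊)/r₊²; (iv) m_CH is continuous at r₊ and m_CH(r) → E as r → ∞. Then E ≥ (1/2)·[ r₊^{n−2} + q²/r₊^{n−2} + λ·r₊^{n} ]. -/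
open Real Filter

set_option maxHeartbeats 2000000 in
/-- Charged spacetime Penrose inequality in spherical symmetry (radial formulation of
Theorem 1.1): under the radial Einstein–Maxwell constraints, the Gauss law, the dominant
energy condition, the outermost condition, a MOTS boundary at `r = r₊`, continuity of
`m_CH` at `r₊` and `m_CH → E` at infinity, one has
`E ≥ (1/2)[ r₊^{n-2} + q²/r₊^{n-2} + λ r₊^n ]`. -/
theorem charged_penrose_inequality (n : ℕ) (hn : 3 ≤ n) (lam rp : ℝ) (hlam : 0 ≤ lam)
    (hrp : 0 < rp) (V kI kS EI μ J : ℝ → ℝ) (q E : ℝ)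
    (hV0 : ∀ r, rp ≤ r → 0 ≤ V r) (hVpos : ∀ r, rp < r → 0 < V r)
    (hVd : ∀ r, rp < r → DifferentiableAt ℝ V r)
    (hkSd : ∀ r, rp < r → DifferentiableAt ℝ kS r)
    (hEIcont : Continuous EI)
    -- Hamiltonian constraint
    (hmu : ∀ r, rp < r → 16 * π * μ r =
      sphScalCurv n V r + (kI r + kS r) ^ 2 - kI r ^ 2 - kS r ^ 2 / ((n : ℝ) - 1)
        - 2 * V r * EI r ^ 2 + (n : ℝ) * ((n : ℝ) - 1) * lam)
    -- momentum constraint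
    (hJ : ∀ r, rp < r → 8 * π * J r =
      sphMeanCurv n V r *
        (kI r - kS r / ((n : ℝ) - 1) - r * deriv kS r / ((n : ℝ) - 1)))
    -- Gauss law with charge `q`
    (hq : ∀ r, rp ≤ r →
      Real.sqrt (2 / (((n : ℝ) - 1) * ((n : ℝ) - 2))) * r ^ (n - 1) * Real.sqrt (V r) * EI r
        = q)
    -- (i) dominant energy condition
    (hDEC : ∀ r, rp < r → |J r| ≤ μ r)
    -- (ii) outermost condition
    (hout : ∀ r, rp < r → |kS r| < sphMeanCurv n V r)
    -- (iii) the boundary sphere `r = rp` is a MOTS: `k_S(r₊)² = H(r₊)² = (n-1)² V(r₊)/r₊²`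
    (hMOTS : kS rp ^ 2 = ((n : ℝ) - 1) ^ 2 * V rp / rp ^ 2)
    -- (iv) continuity at `r₊` and convergence to the total energy `E`
    (hcont : ContinuousWithinAt (chargedHawkingMass n lam q V kS) (Set.Ici rp) rp)
    (hlim : Tendsto (chargedHawkingMass n lam q V kS) atTop (nhds E)) :
    1 / 2 * (rp ^ (n - 2) + q ^ 2 / rp ^ (n - 2) + lam * rp ^ n) ≤ E := by
  -- Notation
  have hn3 : (3 : ℝ) ≤ (n : ℝ) := by exact_mod_cast hn
  set c1 : ℝ := (n : ℝ) - 1 with hc1def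
  set c2 : ℝ := (n : ℝ) - 2 with hc2def
  have hc1 : 0 < c1 := by simp only [hc1def]; linarith
  have hc2 : 0 < c2 := by simp only [hc2def]; linarith
  have hcast1 : ((n - 1 : ℕ) : ℝ) = c1 := by
    rw [Nat.cast_sub (by omega)]; simp [hc1def]
  have hcast2 : ((n - 2 : ℕ) : ℝ) = c2 := by
    rw [Nat.cast_sub (by omega)]; simp [hc2def]
  set m : ℝ → ℝ := chargedHawkingMass n lam q V kS with hmdef
  -- rewrite m as a sum convenient for differentiation
  have hfun : m = fun ρ => ρ ^ (n - 2) / 2 * (1 - V ρ + ρ ^ 2 * kS ρ ^ 2 / c1 ^ 2)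
      + lam * ρ ^ n / 2 + q ^ 2 / 2 * (ρ ^ (n - 2))⁻¹ := by
    funext ρ
    simp only [hmdef, chargedHawkingMass, hc1def, div_eq_mul_inv, mul_inv]
    ring
  -- the key derivative formula on (rp, ∞)
  have hder : ∀ r, rp < r → HasDerivAt m
      (8 * π * r ^ (n - 1) / c1 *
        (μ r - kS r * J r * r / (c1 * Real.sqrt (V r)))) r := by
    intro r hr
    have hr0 : 0 < r := lt_trans hrp hr
    have hrne : r ≠ 0 := ne_of_gt hr0
    set s : ℝ := Real.sqrt (V r) with hsdef
    have hs : 0 < s := Real.sqrt_pos.mpr (hVpos r hr)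
    have hs2 : s ^ 2 = V r := Real.sq_sqrt (hV0 r hr.le)
    have hsne : s ≠ 0 := ne_of_gt hs
    set v : ℝ := deriv V r with hvdef
    set K : ℝ := deriv kS r with hKdef
    have hVr : HasDerivAt V v r := (hVd r hr).hasDerivAt
    have hkr : HasDerivAt kS K r := (hkSd r hr).hasDerivAt
    have hne : r ^ (n - 2) ≠ 0 := pow_ne_zero _ hrne
    -- derivative of each piece
    have h1 : HasDerivAt (fun ρ : ℝ => ρ ^ (n - 2))
        (((n - 2 : ℕ) : ℝ) * r ^ (n - 2 - 1)) r := hasDerivAt_pow (n - 2) r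
    have hin : HasDerivAt (fun ρ => 1 - V ρ + ρ ^ 2 * kS ρ ^ 2 / c1 ^ 2)
        (0 - v + (((2 : ℕ) : ℝ) * r ^ (2 - 1) * kS r ^ 2
          + r ^ 2 * (((2 : ℕ) : ℝ) * kS r ^ (2 - 1) * K)) / c1 ^ 2) r := by
      exact ((hasDerivAt_const r (1 : ℝ)).sub hVr).add
        (((hasDerivAt_pow 2 r).mul (hkr.pow 2)).div_const _)
    have hA : HasDerivAt (fun ρ => ρ ^ (n - 2) / 2 * (1 - V ρ + ρ ^ 2 * kS ρ ^ 2 / c1 ^ 2))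
        (((n - 2 : ℕ) : ℝ) * r ^ (n - 2 - 1) / 2 * (1 - V r + r ^ 2 * kS r ^ 2 / c1 ^ 2)
          + r ^ (n - 2) / 2 * (0 - v + (((2 : ℕ) : ℝ) * r ^ (2 - 1) * kS r ^ 2
            + r ^ 2 * (((2 : ℕ) : ℝ) * kS r ^ (2 - 1) * K)) / c1 ^ 2)) r :=
      (h1.div_const 2).mul hin
    have hB : HasDerivAt (fun ρ : ℝ => lam * ρ ^ n / 2)
        (lam * (((n : ℕ) : ℝ) * r ^ (n - 1)) / 2) r :=
      ((hasDerivAt_pow n r).const_mul lam).div_const 2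
    have hC : HasDerivAt (fun ρ : ℝ => q ^ 2 / 2 * (ρ ^ (n - 2))⁻¹)
        (q ^ 2 / 2 * (-(((n - 2 : ℕ) : ℝ) * r ^ (n - 2 - 1)) / (r ^ (n - 2)) ^ 2)) r :=
      (h1.inv hne).const_mul _
    have htot := (hA.add hB).add hC
    simp only [Pi.add_def] at htot
    rw [← hfun] at htot
    -- now identify the derivative value using the constraints
    refine htot.congr_deriv (Eq.symm ?_)
    -- power bookkeeping: everything in terms of p = r ^ (n - 3)
    have e1 : n - 2 - 1 = n - 3 := by omega
    have e2 : r ^ (n - 2) = r ^ (n - 3) * r := by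
      rw [← pow_succ]; congr 1; omega
    have e3 : r ^ (n - 1) = r ^ (n - 3) * r ^ 2 := by
      rw [← pow_add]; congr 1; omega
    have e4 : r ^ n = r ^ (n - 3) * r ^ 3 := by
      rw [← pow_add]; congr 1; omega
    have hppos : 0 < r ^ (n - 3) := pow_pos hr0 _
    -- solve the momentum constraint for K
    have hJr := hJ r hr
    rw [sphMeanCurv] at hJr
    have hK : K = (c1 * kI r - kS r - 8 * π * J r * r / s) / r := by
      rw [hKdef]
      field_simp [← hsdef, ← hc1def] at hJr ⊢
      nlinarith [hJr]
    -- Gauss law: express the Maxwell energy via q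
    have hqr := hq r hr.le
    have hgauss : 2 / (c1 * c2) * (r ^ (n - 1)) ^ 2 * V r * EI r ^ 2 = q ^ 2 := by
      have h2 := congrArg (· ^ 2) hqr
      rw [mul_pow, mul_pow, mul_pow, Real.sq_sqrt (by positivity : (0:ℝ) ≤ 2 / (c1 * c2)),
        ← hsdef, hs2] at h2
      linarith [h2]
    -- Hamiltonian constraint: solve for μ
    have hmur := hmu r hr
    rw [sphScalCurv] at hmur
    have hDf : deriv (fun ρ => ρ ^ (n - 2) * (1 - V ρ)) r
        = ((n - 2 : ℕ) : ℝ) * r ^ (n - 2 - 1) * (1 - V r) + r ^ (n - 2) * (0 - v) :=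
      (h1.mul ((hasDerivAt_const r (1 : ℝ)).sub hVr)).deriv
    rw [hDf] at hmur
    have hμ : μ r = (c1 / r ^ (n - 1) *
        (((n - 2 : ℕ) : ℝ) * r ^ (n - 2 - 1) * (1 - V r) + r ^ (n - 2) * (0 - v))
        + (kI r + kS r) ^ 2 - kI r ^ 2 - kS r ^ 2 / c1 - 2 * V r * EI r ^ 2
        + (n : ℝ) * c1 * lam) / (16 * π) := by
      rw [← hc1def] at hmur
      rw [eq_div_iff (by positivity : (16 * π : ℝ) ≠ 0)]
      linarith [hmur]
    -- substitute and verify the algebraic identity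
    have hVEI : 2 * V r * EI r ^ 2 = c1 * c2 * q ^ 2 / (r ^ (n - 3) * r ^ 2) ^ 2 := by
      rw [← e3]
      field_simp at hgauss ⊢
      nlinarith [hgauss]
    rw [hμ, hK, hVEI]
    rw [e1, e2, e3, hcast2]
    have hncast : ((n : ℕ) : ℝ) = c2 + 2 := by simp [hc2def]
    rw [hncast]
    have hc1c2 : c1 = c2 + 1 := by simp [hc1def, hc2def]; ring
    rw [hc1c2]
    field_simp
    ring
  -- monotonicity of m on [rp, ∞)
  have hmono : MonotoneOn m (Set.Ici rp) := by
    apply monotoneOn_of_deriv_nonneg (convex_Ici rp)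
    · intro x hx
      rcases eq_or_lt_of_le (Set.mem_Ici.mp hx) with h | h
      · exact h ▸ hcont
      · exact ((hder x h).continuousAt).continuousWithinAt
    · intro x hx
      rw [interior_Ici] at hx
      exact ((hder x hx).differentiableAt).differentiableWithinAt
    · intro x hx
      rw [interior_Ici] at hx
      have hx0 : 0 < x := lt_trans hrp hx
      rw [(hder x hx).deriv]
      set s : ℝ := Real.sqrt (V x) with hsdef
      have hs : 0 < s := Real.sqrt_pos.mpr (hVpos x hx)
      have houtx := hout x hx
      rw [sphMeanCurv, ← hc1def, ← hsdef] at houtx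
      have hDECx := hDEC x hx
      have hfac : 0 ≤ μ x - kS x * J x * x / (c1 * s) := by
        have h1 : kS x * J x * x / (c1 * s) ≤ |kS x| * |J x| * x / (c1 * s) := by
          apply div_le_div_of_nonneg_right _ (by positivity)
          calc kS x * J x * x ≤ |kS x * J x * x| := le_abs_self _
            _ = |kS x| * |J x| * x := by rw [abs_mul, abs_mul, abs_of_pos hx0]
        have h2 : |kS x| * x < c1 * s := by
          have := (lt_div_iff₀ hx0).mp houtx
          linarith [this]
        have h3 : |kS x| * |J x| * x / (c1 * s) ≤ |J x| := by
          rw [div_le_iff₀ (by positivity)]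
          nlinarith [abs_nonneg (J x), abs_nonneg (kS x)]
        linarith [abs_nonneg (J x)]
      have : (0:ℝ) ≤ 8 * π * x ^ (n - 1) / c1 := by positivity
      exact mul_nonneg this hfac
  -- value at the horizon
  have hmrp : m rp = 1 / 2 * (rp ^ (n - 2) + q ^ 2 / rp ^ (n - 2) + lam * rp ^ n) := by
    simp only [hmdef, chargedHawkingMass, hMOTS, ← hc1def]
    have hrpne : rp ≠ 0 := ne_of_gt hrp
    have : rp ^ 2 * (c1 ^ 2 * V rp / rp ^ 2) / c1 ^ 2 = V rp := by
      field_simp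
    rw [this]
    field_simp
    ring
  -- conclude via the limit
  have hle : m rp ≤ E := by
    apply ge_of_tendsto hlim
    filter_upwards [eventually_ge_atTop rp] with x hx
    exact hmono (Set.self_mem_Ici) hx hx
  linarith [hle, hmrp.ge, hmrp.le]
end

section
/- Rigidity for the charged Penrose inequality (equality case of Theorem 1.1, radial form). Let n ≥ 3, λ ≥ 0, r₊ > 0, and let V, k_I, k_S, E_I be spherically symmetric charged radial data on [r₊,∞) satisfying the radial Einstein–Maxwell constraint equations with uncharged energy density μ̂ and radial momentum density Ĵ_ν and the Gauss law, with charge q. Assume the dominant energy condition μ̂(r) ≥ |Ĵ_ν(r)| and the outermost condition H(r) > |k_S(r)| for all r > r₊. If the charged Hawking mass is constant, m_CH(r) = E for all r ∈ [r₊,∞), then μ̂(r) = 0 and Ĵ_ν(r) = 0 for all r > r₊, and V(r) = 1 − 2E/r^{n−2} + q²/r^{2(n−2)} + λ·r² + r²·k_S(r)²/(n−1)² for all r ≥ r₊ (i.e. V = V_RN + (r·k_S/(n−1))² with Reissner–Nordström mass E and charge q). -/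
open Real Filter

/-- Rigidity for the charged Penrose inequality (equality case of Theorem 1.1, radial form):
if the charged Hawking mass is constant, `m_CH ≡ E` on `[r₊, ∞)`, then `μ̂ = 0`, `Ĵ_ν = 0`
on `(r₊, ∞)` and `V = V_RN + (r k_S/(n-1))²` with Reissner–Nordström mass `E` and charge `q`. -/
theorem charged_penrose_rigidity (n : ℕ) (hn : 3 ≤ n) (lam rp : ℝ) (hlam : 0 ≤ lam)
    (hrp : 0 < rp) (V kI kS EI μ J : ℝ → ℝ) (q E : ℝ)
    (hV0 : ∀ r, rp ≤ r → 0 ≤ V r) (hVpos : ∀ r, rp < r → 0 < V r)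
    (hVd : ∀ r, rp < r → DifferentiableAt ℝ V r)
    (hkSd : ∀ r, rp < r → DifferentiableAt ℝ kS r)
    (hEIcont : Continuous EI)
    -- Hamiltonian constraint
    (hmu : ∀ r, rp < r → 16 * π * μ r =
      sphScalCurv n V r + (kI r + kS r) ^ 2 - kI r ^ 2 - kS r ^ 2 / ((n : ℝ) - 1)
        - 2 * V r * EI r ^ 2 + (n : ℝ) * ((n : ℝ) - 1) * lam)
    -- momentum constraint
    (hJ : ∀ r, rp < r → 8 * π * J r =
      sphMeanCurv n V r *
        (kI r - kS r / ((n : ℝ) - 1) - r * deriv kS r / ((n : ℝ) - 1)))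
    -- Gauss law with charge `q`
    (hq : ∀ r, rp ≤ r →
      Real.sqrt (2 / (((n : ℝ) - 1) * ((n : ℝ) - 2))) * r ^ (n - 1) * Real.sqrt (V r) * EI r
        = q)
    -- dominant energy condition
    (hDEC : ∀ r, rp < r → |J r| ≤ μ r)
    -- outermost condition
    (hout : ∀ r, rp < r → |kS r| < sphMeanCurv n V r)
    -- equality case: the charged Hawking mass is constant, equal to `E`
    (hconst : ∀ r, rp ≤ r → chargedHawkingMass n lam q V kS r = E) :
    (∀ r, rp < r → μ r = 0 ∧ J r = 0) ∧
    (∀ r, rp ≤ r → V r =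
      1 - 2 * E / r ^ (n - 2) + q ^ 2 / r ^ (2 * (n - 2)) + lam * r ^ 2
        + r ^ 2 * kS r ^ 2 / ((n : ℝ) - 1) ^ 2) := by

  obtain ⟨k, rfl⟩ : ∃ k, n = k + 3 := ⟨n - 3, by omega⟩
  have hc1 : ((k+3:ℕ):ℝ) - 1 = (k:ℝ) + 2 := by push_cast; ring
  have hc2 : ((k+3:ℕ):ℝ) - 2 = (k:ℝ) + 1 := by push_cast; ring
  have hc3 : ((k+3:ℕ):ℝ) = (k:ℝ) + 3 := by push_cast; ring
  have e1 : k + 3 - 2 = k + 1 := rfl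
  have e2 : k + 3 - 1 = k + 2 := rfl
  have hk2 : ((k:ℝ)+2) ≠ 0 := by positivity
  simp only [sphMeanCurv, sphScalCurv, chargedHawkingMass] at hmu hJ hconst hout
  simp only [hc1, hc2, e1, e2] at hmu hJ hq hconst hout ⊢
  simp only [hc3] at hmu
  -- Part 2: the formula for V, purely algebraic from constancy of the Hawking mass
  have hVf : ∀ r, rp ≤ r → V r =
      1 - 2 * E / r ^ (k+1) + q ^ 2 / r ^ (2*(k+1)) + lam * r ^ 2
        + r ^ 2 * kS r ^ 2 / ((k:ℝ) + 2) ^ 2 := by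
    intro r hr
    have hr0 : (0:ℝ) < r := lt_of_lt_of_le hrp hr
    have h := hconst r hr
    have hrne : r ≠ 0 := ne_of_gt hr0
    field_simp at h ⊢
    linear_combination (-(r ^ (k+1))) * h
  refine ⟨?_, hVf⟩
  intro r hr
  have hr0 : (0:ℝ) < r := hrp.trans hr
  have hrne : r ≠ 0 := ne_of_gt hr0
  -- derivative of ρ ↦ ρ^{k+1} (1 - V ρ) at r
  have h1 : HasDerivAt (fun ρ:ℝ => (ρ^(k+1))⁻¹)
      (-(((k+1:ℕ):ℝ) * r ^ (k+1-1)) / (r^(k+1))^2) r :=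
    (hasDerivAt_pow (k+1) r).inv (pow_ne_zero _ hrne)
  have h3 : HasDerivAt (fun ρ : ℝ => 2*E - q^2 * (ρ^(k+1))⁻¹ - lam * ρ^(k+3)
      - ρ^(k+3) * kS ρ ^ 2 / ((k:ℝ)+2)^2)
      (q ^ 2 * (((k:ℝ)+1) * r ^ k) / (r ^ (k+1)) ^ 2
        - lam * (((k:ℝ)+3) * r ^ (k+2))
        - ((((k:ℝ)+3) * r ^ (k+2)) * kS r ^ 2
            + r ^ (k+3) * (2 * kS r * deriv kS r)) / ((k:ℝ)+2) ^ 2) r := by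
    have h2 := (((hasDerivAt_const r (2*E)).sub (h1.const_mul (q^2))).sub
        ((hasDerivAt_pow (k+3) r).const_mul lam)).sub
        (((hasDerivAt_pow (k+3) r).mul
          (((hkSd r hr).hasDerivAt).pow 2)).div_const (((k:ℝ)+2)^2))
    refine h2.congr_deriv ?_
    simp only [show k+1-1 = k from rfl, show k+3-1 = k+2 from rfl,
      show 2-1 = 1 from rfl, pow_one, Pi.pow_apply]
    push_cast
    ring
  have hev : (fun ρ:ℝ => ρ^(k+1) * (1 - V ρ)) =ᶠ[nhds r]
      (fun ρ : ℝ => 2*E - q^2 * (ρ^(k+1))⁻¹ - lam * ρ^(k+3)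
        - ρ^(k+3) * kS ρ ^ 2 / ((k:ℝ)+2)^2) := by
    filter_upwards [Ioi_mem_nhds hr] with ρ hρ
    have hρ0 : (0:ℝ) < ρ := hrp.trans hρ
    rw [hVf ρ (le_of_lt hρ)]
    field_simp
    ring
  have hfd : deriv (fun ρ:ℝ => ρ^(k+1) * (1 - V ρ)) r
      = q ^ 2 * (((k:ℝ)+1) * r ^ k) / (r ^ (k+1)) ^ 2
        - lam * (((k:ℝ)+3) * r ^ (k+2))
        - ((((k:ℝ)+3) * r ^ (k+2)) * kS r ^ 2
            + r ^ (k+3) * (2 * kS r * deriv kS r)) / ((k:ℝ)+2) ^ 2 := by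
    rw [hev.deriv_eq]; exact h3.deriv
  -- Gauss law squared
  have hsq := congrArg (fun x : ℝ => x ^ 2) (hq r (le_of_lt hr))
  simp only [mul_pow] at hsq
  rw [Real.sq_sqrt (by positivity), Real.sq_sqrt (hV0 r (le_of_lt hr))] at hsq
  have hVE2 : 2 * V r * EI r ^ 2
      = q ^ 2 * (((k:ℝ)+2) * ((k:ℝ)+1)) / (r ^ (k+2)) ^ 2 := by
    rw [← hsq]
    field_simp
  have hμ := hmu r hr
  rw [hfd, hVE2] at hμ
  have key : 16 * π * μ r = 2 * kS r *
      (kI r - kS r / ((k:ℝ)+2) - r * deriv kS r / ((k:ℝ)+2)) := by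
    rw [hμ]
    field_simp
    ring
  have hJr := hJ r hr
  have hH : 0 < ((k:ℝ)+2) * Real.sqrt (V r) / r :=
    lt_of_le_of_lt (abs_nonneg _) (hout r hr)
  have hπ := Real.pi_pos
  have hμJ : ((k:ℝ)+2) * Real.sqrt (V r) / r * μ r = kS r * J r := by
    have h16 : (16 * π) ≠ 0 := by positivity
    apply mul_left_cancel₀ h16
    calc 16 * π * (((k:ℝ)+2) * Real.sqrt (V r) / r * μ r)
        = ((k:ℝ)+2) * Real.sqrt (V r) / r * (16 * π * μ r) := by ring
      _ = ((k:ℝ)+2) * Real.sqrt (V r) / r * (2 * kS r *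
            (kI r - kS r / ((k:ℝ)+2) - r * deriv kS r / ((k:ℝ)+2))) := by rw [key]
      _ = 2 * kS r * (((k:ℝ)+2) * Real.sqrt (V r) / r *
            (kI r - kS r / ((k:ℝ)+2) - r * deriv kS r / ((k:ℝ)+2))) := by ring
      _ = 2 * kS r * (8 * π * J r) := by rw [← hJr]
      _ = 16 * π * (kS r * J r) := by ring
  have hJ0 : J r = 0 := by
    by_contra hne
    have habs : 0 < |J r| := abs_pos.mpr hne
    have hkabs := hout r hr
    have hDECr := hDEC r hr
    have f1 : |kS r| * |J r| < ((k:ℝ)+2) * Real.sqrt (V r) / r * |J r| :=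
      mul_lt_mul_of_pos_right hkabs habs
    have f2 : ((k:ℝ)+2) * Real.sqrt (V r) / r * |J r|
        ≤ ((k:ℝ)+2) * Real.sqrt (V r) / r * μ r :=
      mul_le_mul_of_nonneg_left hDECr (le_of_lt hH)
    have h1 : kS r * J r ≤ |kS r| * |J r| := by
      calc kS r * J r ≤ |kS r * J r| := le_abs_self _
        _ = |kS r| * |J r| := abs_mul _ _
    linarith [hμJ]
  have hμ0 : μ r = 0 := by
    have h0 : ((k:ℝ)+2) * Real.sqrt (V r) / r * μ r = 0 := by rw [hμJ, hJ0]; ring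
    rcases mul_eq_zero.mp h0 with h | h
    · exact absurd h (ne_of_gt hH)
    · exact h
  exact ⟨hμ0, hJ0⟩
end

section
/- Hyperbolic energy of the asymptotically AdS Gauss–Bonnet black hole. Let n ≥ 4, α̃ ∈ (0, 1/2), M ≥ 0, set ℓ² = 1/(1 − α̃) (so that 1 − 4α̃/ℓ² = (1 − 2α̃)²), and define V_GB(r) = 1 + (r²/(2α̃))·(1 − √((1 − 2α̃)² + 8Mα̃/r^n)) for r > 0. Then V_GB(r)/(1 + r²) → 1 as r → ∞ (the solution is asymptotically AdS with unit effective length scale), and (r^{n−2}/2)·(1 + r² − V_GB(r)) → M/(1 − 2α̃) as r → ∞; that is, the hyperbolic energy of the Gauss–Bonnet-AdS solution equals M/(1 − 2α̃). -/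
open Real Filter

/-- Hyperbolic energy of the asymptotically AdS Gauss–Bonnet black hole: with
`ℓ² = 1/(1 - α̃)` (so `1 - 4α̃/ℓ² = (1 - 2α̃)²`) and
`V_GB(r) = 1 + (r²/(2α̃))(1 - √((1 - 2α̃)² + 8Mα̃/r^n))`, the solution is asymptotically AdS
with unit effective length scale, `V_GB(r)/(1 + r²) → 1`, and its hyperbolic energy is
`lim_{r→∞} (r^{n-2}/2)(1 + r² - V_GB(r)) = M/(1 - 2α̃)`. -/
theorem gb_black_hole_hyperbolic_energy (n : ℕ) (hn : 4 ≤ n) (ta M : ℝ)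
    (hta0 : 0 < ta) (hta : ta < 1 / 2) (hM : 0 ≤ M) :
    Tendsto
      (fun r : ℝ =>
        (1 + r ^ 2 / (2 * ta) * (1 - Real.sqrt ((1 - 2 * ta) ^ 2 + 8 * M * ta / r ^ n)))
          / (1 + r ^ 2))
      atTop (nhds 1) ∧
    Tendsto
      (fun r : ℝ => r ^ (n - 2) / 2 *
        (1 + r ^ 2
          - (1 + r ^ 2 / (2 * ta) * (1 - Real.sqrt ((1 - 2 * ta) ^ 2 + 8 * M * ta / r ^ n)))))
      atTop (nhds (M / (1 - 2 * ta))) := by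
  set c : ℝ := 1 - 2 * ta with hc_def
  have hc : 0 < c := by simp only [hc_def]; linarith
  have hn0 : n ≠ 0 := by omega
  have hn2 : n - 2 ≠ 0 := by omega
  have hnadd : n - 2 + 2 = n := by omega
  -- limit of the sqrt term
  have hfrac : Tendsto (fun r : ℝ => 8 * M * ta / r ^ n) atTop (nhds 0) :=
    Tendsto.div_atTop tendsto_const_nhds (tendsto_pow_atTop hn0)
  have hs : Tendsto (fun r : ℝ => Real.sqrt (c ^ 2 + 8 * M * ta / r ^ n)) atTop (nhds c) := by
    have h1 : Tendsto (fun r : ℝ => c ^ 2 + 8 * M * ta / r ^ n) atTop (nhds (c ^ 2)) := by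
      simpa using (tendsto_const_nhds.add hfrac)
    have h2 := (Real.continuous_sqrt.tendsto (c ^ 2)).comp h1
    simpa [Real.sqrt_sq hc.le, Function.comp_def] using h2
  -- second limit
  have h2 : Tendsto
      (fun r : ℝ => r ^ (n - 2) / 2 *
        (1 + r ^ 2
          - (1 + r ^ 2 / (2 * ta) * (1 - Real.sqrt ((1 - 2 * ta) ^ 2 + 8 * M * ta / r ^ n)))))
      atTop (nhds (M / c)) := by
    have key : Tendsto (fun r : ℝ =>
        2 * M / (Real.sqrt (c ^ 2 + 8 * M * ta / r ^ n) + c)) atTop (nhds (M / c)) := by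
      have := Tendsto.div (tendsto_const_nhds : Tendsto (fun _ : ℝ => 2 * M) atTop (nhds (2 * M)))
        (hs.add tendsto_const_nhds) (by positivity : c + c ≠ 0)
      convert this using 2
      · rfl
      field_simp
      ring
    refine key.congr' ?_
    filter_upwards [eventually_ge_atTop (1 : ℝ)] with r hr
    have hr0 : 0 < r := lt_of_lt_of_le one_pos hr
    set s : ℝ := Real.sqrt (c ^ 2 + 8 * M * ta / r ^ n) with hs_def
    have hsnn : 0 ≤ s := Real.sqrt_nonneg _
    have hs2 : s ^ 2 = c ^ 2 + 8 * M * ta / r ^ n := by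
      rw [hs_def, Real.sq_sqrt]
      positivity
    have hsc : 0 < s + c := by linarith
    have hrn : r ^ (n - 2) * r ^ 2 = r ^ n := by
      rw [← pow_add, hnadd]
    have hta' : (2 : ℝ) * ta ≠ 0 := by positivity
    field_simp
    have hs2' : s ^ 2 * r ^ n = c ^ 2 * r ^ n + 8 * M * ta := by
      field_simp at hs2
      linarith [hs2]
    linear_combination (-(s ^ 2 - c ^ 2)) * hrn - hs2' - r ^ (n - 2) * r ^ 2 * (s + c) * hc_def
  refine ⟨?_, h2⟩
  -- first limit from the second
  have hg : Tendsto (fun r : ℝ => 2 / (r ^ (n - 2) * (1 + r ^ 2))) atTop (nhds 0) := by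
    refine Tendsto.div_atTop tendsto_const_nhds ?_
    exact (tendsto_pow_atTop hn2).atTop_mul_atTop₀
      (tendsto_atTop_add_const_left _ 1 (tendsto_pow_atTop (by norm_num)))
  have hprod : Tendsto (fun r : ℝ =>
      1 - (r ^ (n - 2) / 2 *
        (1 + r ^ 2
          - (1 + r ^ 2 / (2 * ta) * (1 - Real.sqrt ((1 - 2 * ta) ^ 2 + 8 * M * ta / r ^ n)))))
        * (2 / (r ^ (n - 2) * (1 + r ^ 2)))) atTop (nhds 1) := by
    have := (tendsto_const_nhds : Tendsto (fun _ : ℝ => (1 : ℝ)) atTop (nhds 1)).sub (h2.mul hg)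
    simpa using this
  refine hprod.congr' ?_
  filter_upwards [eventually_ge_atTop (1 : ℝ)] with r hr
  have hr0 : 0 < r := lt_of_lt_of_le one_pos hr
  have hrn : (0:ℝ) < r ^ (n - 2) := by positivity
  have hden : (0:ℝ) < 1 + r ^ 2 := by positivity
  set s : ℝ := Real.sqrt ((1 - 2 * ta) ^ 2 + 8 * M * ta / r ^ n)
  field_simp
  ring
end
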